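/- Let p be a prime, A a commutative ring of characteristic p, k ∈ ℕ, B = MvPolynomial (Fin k) A, and let E be a B-module with a stratification (∇_n) relative to A which moreover satisfies the composition rule ∇_m ∘ ∇_n = (∏ i, Nat.choose (m i + n i) (n i)) • ∇_{m+n} for all m, n. Set E^{(1)} = {e ∈ E | ∇_n e = 0 for all n with 0 < |n| < p}, and for i ∈ Fin k let e_i be the indicator of i. Then for each i: (a) ∇_{p·e_i} maps E^{(1)} into E^{(1)}; and (b) for all f ∈ B and e ∈ E^{(1)}, ∇_{p·e_i}(f^p • e) = f^p • ∇_{p·e_i}(e) + (∂_i f)^p • e, where ∂_i is the partial derivative in X_i. (Thus the stratification induces a connection ∇^{(1)} on E^{(1)} over the subring of p-th powers.) -/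

import Mathlib

/-- The divided-power operator `D_n` on `MvPolynomial σ R`, determined on monomials by
`D_n (X ^ m) = (∏ i, Nat.choose (m i) (n i)) • X ^ (m - n)` (componentwise truncated
subtraction). -/
noncomputable def dpOp (R : Type*) [CommRing R] (σ : Type*) [Fintype σ] (n : σ →₀ ℕ) :
    MvPolynomial σ R →ₗ[R] MvPolynomial σ R :=
  (Finsupp.lsum ℕ fun m : σ →₀ ℕ =>
    (∏ i, Nat.choose (m i) (n i)) • (MvPolynomial.monomial (m - n) : R →ₗ[R] MvPolynomial σ R))
  ∘ₗ (AddMonoidAlgebra.coeffLinearEquiv R).toLinearMap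

/-- A stratification of a `MvPolynomial (Fin k) A`-module `E` relative to `A`: a family of
`A`-linear endomorphisms `∇_n` with `∇_0 = id` satisfying the generalized Leibniz rule with
respect to the divided-power operators `D_l`. -/
structure Stratification (A : Type*) [CommRing A] (k : ℕ)
    (E : Type*) [AddCommGroup E] [Module (MvPolynomial (Fin k) A) E]
    [Module A E] [IsScalarTower A (MvPolynomial (Fin k) A) E] where
  op : (Fin k →₀ ℕ) → E →ₗ[A] E
  op_zero : op 0 = LinearMap.id
  leibniz : ∀ (n : Fin k →₀ ℕ) (f : MvPolynomial (Fin k) A) (e : E),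
    op n (f • e) = ∑ l ∈ Finset.Iic n, dpOp A (Fin k) l f • op (n - l) e

lemma dpOp_monomial (R : Type*) [CommRing R] (σ : Type*) [Fintype σ] (n m : σ →₀ ℕ) (c : R) :
    dpOp R σ n (MvPolynomial.monomial m c)
      = (∏ i, Nat.choose (m i) (n i)) • MvPolynomial.monomial (m - n) c := by
  classical
  exact (MvPolynomial.sum_monomial_eq (by simp)).trans rfl

lemma dpOp_zero_apply (R : Type*) [CommRing R] (σ : Type*) [Fintype σ] (f : MvPolynomial σ R) :
    dpOp R σ 0 f = f := by
  induction f using MvPolynomial.induction_on' with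
  | monomial m c => simp [dpOp_monomial]
  | add f g hf hg => rw [map_add, hf, hg]

lemma choose_p_mul (p a : ℕ) (hp : p.Prime) : Nat.choose (p * a) p ≡ a [MOD p] := by
  haveI : Fact p.Prime := ⟨hp⟩
  have h := Choose.choose_modEq_choose_mod_mul_choose_div_nat (n := p * a) (k := p) (p := p)
  simpa [Nat.mul_div_cancel_left _ hp.pos, Nat.mul_mod_right, Nat.mod_self,
    Nat.div_self hp.pos] using h

lemma dpOp_frobenius (p : ℕ) (hp : p.Prime) (A : Type*) [CommRing A] [CharP A p] (k : ℕ)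
    (i : Fin k) (f : MvPolynomial (Fin k) A) :
    dpOp A (Fin k) (p • Finsupp.single i 1) (f ^ p)
      = (MvPolynomial.pderiv i f : MvPolynomial (Fin k) A) ^ p := by
  haveI : Fact p.Prime := ⟨hp⟩
  induction f using MvPolynomial.induction_on' with
  | add f g hf hg =>
      rw [add_pow_char, map_add, hf, hg, map_add, add_pow_char]
  | monomial m c =>
      rw [MvPolynomial.monomial_pow, dpOp_monomial, MvPolynomial.pderiv_monomial,
        MvPolynomial.monomial_pow]
      have hexp : p • m - p • Finsupp.single i 1 = p • (m - Finsupp.single i 1) := by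
        ext j
        simp only [Finsupp.tsub_apply, Finsupp.smul_apply, smul_eq_mul, Nat.mul_sub]
      have hcoef : (∏ j, Nat.choose ((p • m) j) ((p • Finsupp.single i 1) j))
          = Nat.choose (p * m i) p := by
        rw [Finset.prod_eq_single i]
        · simp
        · intro j _ hj; simp [Finsupp.single_apply, hj.symm]
        · simp
      rw [hcoef, hexp, MvPolynomial.smul_monomial]
      congr 1
      have h1 : ((Nat.choose (p * m i) p : ℕ) : A) = ((m i : ℕ) : A) :=
        (CharP.natCast_eq_natCast A p).mpr (choose_p_mul p (m i) hp)
      have hfermat : (m i) ^ p ≡ m i [MOD p] := by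
        have h := ZMod.pow_card ((m i : ℕ) : ZMod p)
        rwa [← Nat.cast_pow, ZMod.natCast_eq_natCast_iff] at h
      have h2 : ((m i : ℕ) : A) ^ p = ((m i : ℕ) : A) := by
        rw [← Nat.cast_pow]
        exact (CharP.natCast_eq_natCast A p).mpr hfermat
      rw [nsmul_eq_mul, h1, mul_pow, h2]
      ring

lemma choose_symm_add' (a b : ℕ) : (a + b).choose b = (b + a).choose a := by
  have h := Nat.choose_symm (n := a + b) (k := a) (Nat.le_add_right a b)
  rw [Nat.add_sub_cancel_left] at h
  rw [add_comm b a, h]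

/-- For a stratification satisfying the composition rule, the operator `∇_(p·e_i)`
(a) preserves `E⁽¹⁾ = (e | ∇_n e = 0 for 0 < |n| < p)` and (b) satisfies the twisted
Leibniz rule `∇_(p·e_i) (f^p • e) = f^p • ∇_(p·e_i) e + (∂_i f)^p • e` on `E⁽¹⁾`. -/
theorem stratification_induced_connection (p : ℕ) (hp : p.Prime)
    (A : Type*) [CommRing A] [CharP A p] (k : ℕ)
    (E : Type*) [AddCommGroup E] [Module (MvPolynomial (Fin k) A) E]
    [Module A E] [IsScalarTower A (MvPolynomial (Fin k) A) E]
    (S : Stratification A k E)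
    (hcomp : ∀ m n : Fin k →₀ ℕ,
      S.op m ∘ₗ S.op n = (∏ i, Nat.choose (m i + n i) (n i)) • S.op (m + n))
    (i : Fin k) (e : E)
    (he : ∀ n : Fin k →₀ ℕ, 0 < ∑ j, n j → ∑ j, n j < p → S.op n e = 0) :
    (∀ n : Fin k →₀ ℕ, 0 < ∑ j, n j → ∑ j, n j < p →
        S.op n (S.op (p • Finsupp.single i 1) e) = 0) ∧
    (∀ f : MvPolynomial (Fin k) A,
        S.op (p • Finsupp.single i 1) (f ^ p • e)
          = f ^ p • S.op (p • Finsupp.single i 1) e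
            + (MvPolynomial.pderiv i f : MvPolynomial (Fin k) A) ^ p • e) := by
  classical
  set ν : Fin k →₀ ℕ := p • Finsupp.single i 1 with hν
  have hνs : ν = Finsupp.single i p := by
    rw [hν, Finsupp.smul_single, smul_eq_mul, mul_one]
  constructor
  · -- part (a)
    intro n hn1 hn2
    have h1 := DFunLike.congr_fun (hcomp n ν) e
    have h2 := DFunLike.congr_fun (hcomp ν n) e
    simp only [LinearMap.coe_comp, Function.comp_apply, LinearMap.smul_apply] at h1 h2
    rw [he n hn1 hn2, map_zero] at h2
    have hc : (∏ j, Nat.choose (n j + ν j) (ν j)) = ∏ j, Nat.choose (ν j + n j) (n j) := by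
      exact Finset.prod_congr rfl fun j _ => choose_symm_add' (n j) (ν j)
    rw [h1, hc, add_comm n ν]
    exact h2.symm
  · -- part (b)
    intro f
    rw [S.leibniz]
    have hνne : (0 : Fin k →₀ ℕ) ≠ ν := by
      rw [hνs]
      intro h
      have := congrFun (congrArg (fun g : Fin k →₀ ℕ => (g : Fin k → ℕ)) h) i
      simp at this
      exact hp.pos.ne' this.symm
    have hmemν : ν ∈ Finset.Iic ν := Finset.mem_Iic.mpr le_rfl
    rw [← Finset.add_sum_erase _ _ hmemν]
    have hterm : dpOp A (Fin k) ν (f ^ p) • S.op (ν - ν) e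
        = (MvPolynomial.pderiv i f : MvPolynomial (Fin k) A) ^ p • e := by
      rw [tsub_self, S.op_zero, hν, dpOp_frobenius p hp]
      rfl
    have hrest : ∑ l ∈ (Finset.Iic ν).erase ν, dpOp A (Fin k) l (f ^ p) • S.op (ν - l) e
        = f ^ p • S.op ν e := by
      rw [Finset.sum_eq_single_of_mem 0
        (Finset.mem_erase.mpr ⟨hνne, Finset.mem_Iic.mpr (zero_le (a := ν))⟩)]
      · rw [dpOp_zero_apply, tsub_zero]
      · intro l hl hl0
        obtain ⟨hlν, hlle⟩ := Finset.mem_erase.mp hl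
        have hle : ∀ j, l j ≤ (Finsupp.single i p : Fin k →₀ ℕ) j := by
          intro j
          have := Finsupp.le_def.mp (Finset.mem_Iic.mp hlle) j
          rwa [hνs] at this
        have hlj : ∀ j, j ≠ i → l j = 0 := by
          intro j hj
          have := hle j
          rwa [Finsupp.single_apply, if_neg (Ne.symm hj), Nat.le_zero] at this
        have hsum : ∑ j, (ν - l) j = p - l i := by
          rw [Finset.sum_eq_single i]
          · rw [Finsupp.tsub_apply, hνs, Finsupp.single_apply, if_pos rfl]
          · intro j _ hj
            rw [Finsupp.tsub_apply, hνs, Finsupp.single_apply, if_neg (Ne.symm hj), hlj j hj]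
            rfl
          · intro h; exact absurd (Finset.mem_univ i) h
        have hlip : l i ≤ p := by simpa using hle i
        have hlilt : l i < p := by
          rcases lt_or_eq_of_le hlip with h | h
          · exact h
          · exfalso
            apply hlν
            ext j
            rcases eq_or_ne j i with rfl | hj
            · rw [h, hνs, Finsupp.single_apply, if_pos rfl]
            · rw [hlj j hj, hνs, Finsupp.single_apply, if_neg (Ne.symm hj)]
        have hli0 : 0 < l i := by
          rcases Nat.eq_zero_or_pos (l i) with h | h
          · exfalso
            apply hl0
            ext j
            rcases eq_or_ne j i with rfl | hj
            · simpa using h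
            · simpa using hlj j hj
          · exact h
        rw [he (ν - l) (by rw [hsum]; omega) (by rw [hsum]; omega), smul_zero]
    rw [hterm, hrest, add_comm]
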